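/- (Hindman–Strauss) Let (S, +) be an infinite countable left cancellative semigroup, let ℱ = (F_n)_{n∈ℕ} be a left Følner sequence in S, and let A ⊆ S. Then there is a countably additive measure μ on the Borel σ-algebra of the Stone–Čech compactification βS (the space of ultrafilters on S with its standard compact Hausdorff topology) such that: (1) μ(cl A) = d̄_ℱ(A); (2) for all B ⊆ S, μ(cl B) ≤ d̄_ℱ(B); (3) for every Borel set B ⊆ βS and every t ∈ S, μ(−t + B) = μ(B) = μ(t + B), where t + B is the image of B under left translation ν ↦ e(t) + ν by the principal ultrafilter e(t) in the semigroup (βS, +), and −t + B is its preimage; and (4) μ(βS) = 1. -/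

import Mathlib

open scoped symmDiff ENNReal Topology
open Filter Set MeasureTheory TopologicalSpace

attribute [local instance] Ultrafilter.add Ultrafilter.addSemigroup


/-- `(F_n)` is a left Følner sequence in the additive semigroup `S`. -/
def IsLeftFolner {S : Type*} [AddSemigroup S] [DecidableEq S] (F : ℕ → Finset S) : Prop :=
  (∀ n, (F n).Nonempty) ∧
    ∀ s : S, Filter.Tendsto
      (fun n => ((((F n).image (s + ·)) ∆ (F n)).card : ℝ) / (F n).card)
      Filter.atTop (nhds 0)

/-- The upper density of `A ⊆ S` along the sequence of finite sets `(F_n)`: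
`d̄_ℱ(A) = limsup_n |A ∩ F_n| / |F_n|`. -/
noncomputable def upperDensity {S : Type*} (F : ℕ → Finset S) (A : Set S) : ℝ :=
  Filter.limsup (fun n => (Set.ncard (A ∩ ↑(F n)) : ℝ) / (F n).card) Filter.atTop

namespace HindmanStrauss

variable {S : Type*}

/-- The basic clopen subset of the space of ultrafilters. -/
def clop (B : Set S) : Set (Ultrafilter S) := {u : Ultrafilter S | B ∈ u}

theorem mem_clop {B : Set S} {u : Ultrafilter S} : u ∈ clop B ↔ B ∈ u := Iff.rfl

theorem clop_univ : clop (univ : Set S) = univ := by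
  exact eq_univ_of_forall fun u => univ_mem

theorem clop_mono {B C : Set S} (h : B ⊆ C) : clop B ⊆ clop C :=
  fun _ hu => mem_of_superset hu h

theorem clop_subset_iff {B C : Set S} : clop B ⊆ clop C ↔ B ⊆ C := by
  refine ⟨fun h x hx => ?_, clop_mono⟩
  have : (pure x : Ultrafilter S) ∈ clop B := by simpa [mem_clop] using hx
  simpa [mem_clop] using h this

theorem clop_inter (B C : Set S) : clop (B ∩ C) = clop B ∩ clop C := by
  ext u; exact inter_mem_iff

theorem clop_compl (B : Set S) : clop Bᶜ = (clop B)ᶜ := by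
  ext u; simp [clop, Ultrafilter.compl_mem_iff_notMem]

theorem isOpen_clop (B : Set S) : IsOpen (clop B) := ultrafilter_isOpen_basic B

theorem isClosed_clop (B : Set S) : IsClosed (clop B) := ultrafilter_isClosed_basic B

theorem isCompact_clop (B : Set S) : IsCompact (clop B) :=
  (isClosed_clop B).isCompact

/-- Separation of a compact set from an open superset by a basic clopen set. -/
theorem exists_clop_subset {K U : Set (Ultrafilter S)} (hK : IsCompact K)
    (hU : IsOpen U) (h : K ⊆ U) : ∃ B : Set S, K ⊆ clop B ∧ clop B ⊆ U := by
  classical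
  -- cover K by basic clopen subsets of U
  have hcov : K ⊆ ⋃ i : {s : Set S // clop s ⊆ U}, clop i.1 := by
    intro u hu
    obtain ⟨v, hvB, huv, hvU⟩ :=
      ultrafilterBasis_is_basis.exists_subset_of_mem_open (h hu) hU
    obtain ⟨s, rfl⟩ := hvB
    exact mem_iUnion.2 ⟨⟨s, hvU⟩, huv⟩
  obtain ⟨T, hT⟩ := hK.elim_finite_subcover (fun i : {s : Set S // clop s ⊆ U} => clop i.1)
    (fun i => isOpen_clop i.1) hcov
  refine ⟨⋃ i ∈ T, i.1, ?_, ?_⟩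
  · intro u hu
    obtain ⟨i, hiT, hi⟩ := mem_iUnion₂.1 (hT hu)
    exact mem_of_superset hi (subset_biUnion_of_mem (u := fun i => i.1) hiT)
  · intro u hu
    rw [mem_clop, ← Finset.set_biUnion_coe, Ultrafilter.finite_biUnion_mem_iff T.finite_toSet] at hu
    obtain ⟨i, _, hi⟩ := hu
    exact i.2 hi


theorem clop_union (B C : Set S) : clop (B ∪ C) = clop B ∪ clop C := by
  ext u
  exact Ultrafilter.union_mem_iff

section Translation
variable [AddSemigroup S]

/-- Preimage of a set under left translation. -/
def preimT (t : S) (B : Set S) : Set S := {x | t + x ∈ B}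

/-- Left translation by the principal ultrafilter at `t`. -/
def tr (t : S) (ν : Ultrafilter S) : Ultrafilter S := (pure t : Ultrafilter S) + ν

theorem mem_tr {t : S} {B : Set S} {ν : Ultrafilter S} : B ∈ tr t ν ↔ preimT t B ∈ ν := by
  change (∀ᶠ m in ↑((pure t : Ultrafilter S) + ν), m ∈ B) ↔ _
  rw [Ultrafilter.eventually_add]
  simp only [Ultrafilter.coe_pure, eventually_pure]
  rfl

theorem tr_preimage_clop (t : S) (B : Set S) : tr t ⁻¹' clop B = clop (preimT t B) := by
  ext ν; exact mem_tr

theorem continuous_tr (t : S) : Continuous (tr t) := by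
  refine ultrafilterBasis_is_basis.continuous_iff.2 (Set.forall_mem_range.mpr fun B => ?_)
  rw [show {u : Ultrafilter S | B ∈ u} = clop B from rfl, tr_preimage_clop]
  exact ultrafilter_isOpen_basic _

variable {t : S}

variable (inj : Function.Injective (fun x : S => t + x))
include inj

theorem preimT_timg (C : Set S) : preimT t ((t + ·) '' C) = C := by
  ext x
  constructor
  · rintro ⟨y, hy, he⟩
    exact (inj he) ▸ hy
  · exact fun h => ⟨x, h, rfl⟩

omit inj in
theorem timg_preimT (C : Set S) : (t + ·) '' preimT t C = C ∩ (t + ·) '' univ := by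
  ext y
  constructor
  · rintro ⟨x, hx, rfl⟩
    exact ⟨hx, mem_image_of_mem _ (mem_univ x)⟩
  · rintro ⟨hyC, x, -, rfl⟩
    exact ⟨x, hyC, rfl⟩

theorem tr_injective : Function.Injective (tr t) := by
  intro ν ν' h
  have key : ∀ C : Set S, C ∈ ν ↔ C ∈ ν' := by
    intro C
    have h1 : ((t + ·) '' C ∈ tr t ν) ↔ ((t + ·) '' C ∈ tr t ν') := by rw [h]
    simpa [mem_tr, preimT_timg inj] using h1
  exact Ultrafilter.coe_injective (Filter.ext fun s => key s)

theorem range_tr : Set.range (tr t) = clop ((t + ·) '' univ) := by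
  ext ν
  constructor
  · rintro ⟨ν₀, rfl⟩
    rw [mem_clop, mem_tr, preimT_timg inj]
    exact univ_mem
  · intro hν
    have large : Set.range (fun x : S => t + x) ∈ ν := by
      rw [← image_univ]; exact hν
    refine ⟨ν.comap inj large, ?_⟩
    refine Ultrafilter.coe_injective (Filter.ext fun C => ?_)
    show C ∈ tr t (ν.comap inj large) ↔ C ∈ ν
    rw [mem_tr, Ultrafilter.mem_comap, timg_preimT]
    constructor
    · exact fun hC => mem_of_superset hC inter_subset_left
    · exact fun hC => inter_mem hC hν

theorem tr_image_clop (B : Set S) : tr t '' clop B = clop ((t + ·) '' B) := by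
  ext ν
  constructor
  · rintro ⟨ν₀, h0, rfl⟩
    rw [mem_clop, mem_tr, preimT_timg inj]
    exact h0
  · intro hν
    have hR : ν ∈ Set.range (tr t) := by
      rw [range_tr inj]
      exact clop_mono (image_mono (subset_univ B)) hν
    obtain ⟨ν₀, rfl⟩ := hR
    refine ⟨ν₀, ?_, rfl⟩
    rwa [mem_clop, mem_tr, preimT_timg inj] at hν

theorem tr_image_open {U : Set (Ultrafilter S)} (hU : IsOpen U) : IsOpen (tr t '' U) := by
  have hrw : tr t '' U = clop ((t + ·) '' univ) ∩ (tr t '' Uᶜ)ᶜ := by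
    ext ν
    constructor
    · rintro ⟨ν₀, h0, rfl⟩
      refine ⟨(range_tr inj) ▸ mem_range_self ν₀, ?_⟩
      rintro ⟨ν₁, h1, he⟩
      exact h1 (tr_injective inj he ▸ h0)
    · rintro ⟨hR, hnc⟩
      have : ν ∈ Set.range (tr t) := (range_tr inj) ▸ hR
      obtain ⟨ν₀, rfl⟩ := this
      refine ⟨ν₀, ?_, rfl⟩
      by_contra hc
      exact hnc ⟨ν₀, hc, rfl⟩
  rw [hrw]
  have hcl : IsClosed (tr t '' Uᶜ) :=
    ((hU.isClosed_compl.isCompact).image (continuous_tr t)).isClosed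
  exact (ultrafilter_isOpen_basic _).inter hcl.isOpen_compl

end Translation

section ContentConstruction

variable (m : Set S → ℝ)

instance instNonemptyAdm (K : Set (Ultrafilter S)) : Nonempty {B : Set S // K ⊆ clop B} :=
  ⟨⟨univ, by rw [clop_univ]; exact subset_univ K⟩⟩

/-- The ENNReal-valued set function on compacts: infimum of `m` over clopen covers. -/
noncomputable def lamE (K : Set (Ultrafilter S)) : ℝ≥0∞ :=
  ⨅ B : {B : Set S // K ⊆ clop B}, ENNReal.ofReal (m B.1)

theorem lamE_le {K : Set (Ultrafilter S)} {B : Set S} (h : K ⊆ clop B) :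
    lamE m K ≤ ENNReal.ofReal (m B) :=
  iInf_le (fun B : {B : Set S // K ⊆ clop B} => ENNReal.ofReal (m B.1)) ⟨B, h⟩

theorem le_lamE {K : Set (Ultrafilter S)} {x : ℝ≥0∞}
    (h : ∀ B : Set S, K ⊆ clop B → x ≤ ENNReal.ofReal (m B)) : x ≤ lamE m K :=
  le_iInf fun B => h B.1 B.2

theorem lamE_mono {K K' : Set (Ultrafilter S)} (h : K ⊆ K') : lamE m K ≤ lamE m K' :=
  le_lamE m fun B hB => lamE_le m (h.trans hB)

theorem lamE_ne_top (K : Set (Ultrafilter S)) : lamE m K ≠ ∞ :=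
  ne_top_of_le_ne_top ENNReal.ofReal_ne_top
    (lamE_le m (by rw [clop_univ]; exact subset_univ K))

variable (hmono : ∀ B C : Set S, B ⊆ C → m B ≤ m C)

include hmono in
theorem lamE_clop (B : Set S) : lamE m (clop B) = ENNReal.ofReal (m B) := by
  refine le_antisymm (lamE_le m subset_rfl) (le_lamE m fun D hD => ?_)
  exact ENNReal.ofReal_le_ofReal (hmono B D (clop_subset_iff.mp hD))

variable (hnn : ∀ B : Set S, 0 ≤ m B)
variable (hsub : ∀ B C : Set S, m (B ∪ C) ≤ m B + m C)

include hnn hsub in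
theorem lamE_union_le (K₁ K₂ : Set (Ultrafilter S)) :
    lamE m (K₁ ∪ K₂) ≤ lamE m K₁ + lamE m K₂ := by
  have hrw : lamE m K₁ + lamE m K₂ = ⨅ B₁ : {B : Set S // K₁ ⊆ clop B},
      ⨅ B₂ : {B : Set S // K₂ ⊆ clop B},
      (ENNReal.ofReal (m B₁.1) + ENNReal.ofReal (m B₂.1)) := by
    rw [lamE, lamE, ENNReal.iInf_add]
    exact iInf_congr fun B₁ => ENNReal.add_iInf
  rw [hrw]
  refine le_iInf fun B₁ => le_iInf fun B₂ => ?_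
  calc lamE m (K₁ ∪ K₂) ≤ ENNReal.ofReal (m (B₁.1 ∪ B₂.1)) := by
        refine lamE_le m ?_
        rw [clop_union]
        exact union_subset_union B₁.2 B₂.2
    _ ≤ ENNReal.ofReal (m B₁.1 + m B₂.1) :=
        ENNReal.ofReal_le_ofReal (hsub _ _)
    _ = ENNReal.ofReal (m B₁.1) + ENNReal.ofReal (m B₂.1) :=
        ENNReal.ofReal_add (hnn _) (hnn _)

variable (hadd : ∀ B C : Set S, Disjoint B C → m (B ∪ C) = m B + m C)

include hnn hsub hadd in
theorem lamE_union_disjoint {K₁ K₂ : Set (Ultrafilter S)} (hK₁ : IsCompact K₁)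
    (hK₂ : IsClosed K₂) (hdis : Disjoint K₁ K₂) :
    lamE m (K₁ ∪ K₂) = lamE m K₁ + lamE m K₂ := by
  refine le_antisymm (lamE_union_le m hnn hsub K₁ K₂) ?_
  obtain ⟨B, hKB, hBU⟩ := exists_clop_subset hK₁ hK₂.isOpen_compl
    (disjoint_left.1 hdis)
  refine le_lamE m fun D hD => ?_
  have h₁ : K₁ ⊆ clop (D ∩ B) := by
    rw [clop_inter]; exact subset_inter ((union_subset_iff.1 hD).1) hKB
  have h₂ : K₂ ⊆ clop (D ∩ Bᶜ) := by
    rw [clop_inter, clop_compl]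
    refine subset_inter ((union_subset_iff.1 hD).2) ?_
    intro u hu hc
    exact (hBU hc) hu
  calc lamE m K₁ + lamE m K₂
      ≤ ENNReal.ofReal (m (D ∩ B)) + ENNReal.ofReal (m (D ∩ Bᶜ)) :=
        add_le_add (lamE_le m h₁) (lamE_le m h₂)
    _ = ENNReal.ofReal (m (D ∩ B) + m (D ∩ Bᶜ)) := (ENNReal.ofReal_add (hnn _) (hnn _)).symm
    _ = ENNReal.ofReal (m D) := by
        rw [← hadd _ _ (disjoint_compl_right.mono inter_subset_right inter_subset_right),
          Set.inter_union_compl]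

include hnn hsub hadd in
theorem lamE_sup_coe (K₁ K₂ : Compacts (Ultrafilter S)) (h₂ : IsClosed (K₂ : Set (Ultrafilter S)))
    (hdis : Disjoint (K₁ : Set (Ultrafilter S)) (K₂ : Set (Ultrafilter S))) :
    lamE m (↑(K₁ ⊔ K₂)) = lamE m ↑K₁ + lamE m ↑K₂ := by
  rw [Compacts.coe_sup]
  exact lamE_union_disjoint m hnn hsub hadd K₁.2 h₂ hdis

/-- The content on the space of ultrafilters induced by `m`. -/
noncomputable def contOf : Content (Ultrafilter S) where
  toFun K := (lamE m K).toNNReal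
  mono' K₁ K₂ h := ENNReal.toNNReal_mono (lamE_ne_top m K₂) (lamE_mono m h)
  sup_disjoint' K₁ K₂ hdis _h₁ h₂ := by
    have h := congrArg ENNReal.toNNReal (lamE_sup_coe m hnn hsub hadd K₁ K₂ h₂ hdis)
    rwa [ENNReal.toNNReal_add (lamE_ne_top m _) (lamE_ne_top m _)] at h
  sup_le' K₁ K₂ := by
    rw [← ENNReal.toNNReal_add (lamE_ne_top m _) (lamE_ne_top m _)]
    refine ENNReal.toNNReal_mono (ENNReal.add_ne_top.2 ⟨lamE_ne_top m _, lamE_ne_top m _⟩) ?_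
    rw [Compacts.coe_sup]
    exact lamE_union_le m hnn hsub _ _

end ContentConstruction

section OuterMeasure

variable [AddSemigroup S] (m : Set S → ℝ)
variable (hnn : ∀ B : Set S, 0 ≤ m B)
variable (hmono : ∀ B C : Set S, B ⊆ C → m B ≤ m C)
variable (hsub : ∀ B C : Set S, m (B ∪ C) ≤ m B + m C)
variable (hadd : ∀ B C : Set S, Disjoint B C → m (B ∪ C) = m B + m C)

include hnn hsub hadd

theorem contOf_coe (K : Compacts (Ultrafilter S)) :
    (contOf m hnn hsub hadd K : ℝ≥0∞) = lamE m ↑K :=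
  ENNReal.coe_toNNReal (lamE_ne_top m _)

include hmono in
theorem outerMeasure_clop (B : Set S) :
    (contOf m hnn hsub hadd).outerMeasure (clop B) = ENNReal.ofReal (m B) := by
  rw [(contOf m hnn hsub hadd).outerMeasure_of_isOpen _ (isOpen_clop B),
    (contOf m hnn hsub hadd).innerContent_of_isCompact (isCompact_clop B) (isOpen_clop B),
    contOf_coe m hnn hsub hadd, Compacts.coe_mk, lamE_clop m hmono]

include hmono in
theorem outer_open_le {U V : Set (Ultrafilter S)} (hU : IsOpen U) (hV : IsOpen V)
    (h : ∀ B : Set S, clop B ⊆ U → ∃ C : Set S, clop C ⊆ V ∧ m B ≤ m C) :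
    (contOf m hnn hsub hadd).outerMeasure U ≤ (contOf m hnn hsub hadd).outerMeasure V := by
  set μc := contOf m hnn hsub hadd with hμc
  rw [μc.outerMeasure_of_isOpen U hU, μc.outerMeasure_of_isOpen V hV, Content.innerContent]
  refine iSup₂_le fun K hK => ?_
  obtain ⟨B, hKB, hBU⟩ := exists_clop_subset K.2 hU hK
  obtain ⟨C, hCV, hmBC⟩ := h B hBU
  calc (μc K : ℝ≥0∞) = lamE m ↑K := contOf_coe m hnn hsub hadd K
    _ ≤ ENNReal.ofReal (m B) := lamE_le m hKB
    _ ≤ ENNReal.ofReal (m C) := ENNReal.ofReal_le_ofReal hmBC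
    _ = (μc ⟨clop C, isCompact_clop C⟩ : ℝ≥0∞) := by
        rw [contOf_coe m hnn hsub hadd, Compacts.coe_mk, lamE_clop m hmono]
    _ ≤ μc.innerContent ⟨V, hV⟩ := μc.le_innerContent _ _ hCV

variable (hinv : ∀ (t : S) (B : Set S), m (preimT t B) = m B)

include hmono hinv

theorem outer_tr_open {t : S} (inj : Function.Injective (fun x : S => t + x))
    {U : Set (Ultrafilter S)} (hU : IsOpen U) :
    (contOf m hnn hsub hadd).outerMeasure (tr t ⁻¹' U) =
      (contOf m hnn hsub hadd).outerMeasure (U ∩ clop ((t + ·) '' univ)) := by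
  refine le_antisymm ?_ ?_
  · refine outer_open_le m hnn hmono hsub hadd (hU.preimage (continuous_tr t))
      (hU.inter (isOpen_clop _)) fun B hB => ?_
    refine ⟨(t + ·) '' B, ?_, ?_⟩
    · rw [← tr_image_clop inj]
      exact subset_inter ((image_subset_iff.2 hB)) (by
        rw [← range_tr inj]; exact image_subset_range _ _)
    · have h1 := hinv t ((t + ·) '' B)
      rw [preimT_timg inj] at h1
      exact h1.le
  · refine outer_open_le m hnn hmono hsub hadd (hU.inter (isOpen_clop _))
      (hU.preimage (continuous_tr t)) fun C hC => ?_
    refine ⟨preimT t C, ?_, (hinv t C).ge⟩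
    rw [← tr_preimage_clop]
    exact fun ν hν => (hC hν).1

theorem outer_tr {t : S} (inj : Function.Injective (fun x : S => t + x))
    (X : Set (Ultrafilter S)) :
    (contOf m hnn hsub hadd).outerMeasure (tr t ⁻¹' X) =
      (contOf m hnn hsub hadd).outerMeasure (X ∩ clop ((t + ·) '' univ)) := by
  set μc := contOf m hnn hsub hadd with hμc
  have hXpre : tr t ⁻¹' X = tr t ⁻¹' (X ∩ clop ((t + ·) '' univ)) := by
    ext ν
    have hmem : tr t ν ∈ clop ((t + ·) '' univ) := by
      rw [← range_tr inj]; exact mem_range_self ν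
    simp only [mem_preimage, mem_inter_iff, hmem, and_true]
  refine le_antisymm ?_ ?_
  · rw [μc.outerMeasure_eq_iInf (X ∩ clop ((t + ·) '' univ))]
    refine le_iInf fun U => le_iInf fun hU => le_iInf fun hXU => ?_
    rw [← μc.outerMeasure_of_isOpen U hU]
    calc μc.outerMeasure (tr t ⁻¹' X) = μc.outerMeasure (tr t ⁻¹' (X ∩ clop ((t + ·) '' univ))) :=
          by rw [← hXpre]
      _ ≤ μc.outerMeasure (tr t ⁻¹' U) := μc.outerMeasure.mono (preimage_mono hXU)
      _ = μc.outerMeasure (U ∩ clop ((t + ·) '' univ)) :=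
          outer_tr_open m hnn hmono hsub hadd hinv inj hU
      _ ≤ μc.outerMeasure U := μc.outerMeasure.mono inter_subset_left
  · rw [μc.outerMeasure_eq_iInf (tr t ⁻¹' X)]
    refine le_iInf fun V => le_iInf fun hV => le_iInf fun hXV => ?_
    rw [← μc.outerMeasure_of_isOpen V hV]
    have hWopen : IsOpen (tr t '' V) := tr_image_open inj hV
    have hsub2 : X ∩ clop ((t + ·) '' univ) ⊆ tr t '' V := by
      rintro x ⟨hx, hR⟩
      rw [← range_tr inj] at hR
      obtain ⟨ν, rfl⟩ := hR
      exact ⟨ν, hXV hx, rfl⟩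
    have hWR : tr t '' V ∩ clop ((t + ·) '' univ) = tr t '' V := by
      refine inter_eq_left.2 ?_
      rw [← range_tr inj]
      exact image_subset_range _ _
    calc μc.outerMeasure (X ∩ clop ((t + ·) '' univ)) ≤ μc.outerMeasure (tr t '' V) :=
          μc.outerMeasure.mono hsub2
      _ = μc.outerMeasure (tr t '' V ∩ clop ((t + ·) '' univ)) := by rw [hWR]
      _ = μc.outerMeasure (tr t ⁻¹' (tr t '' V)) :=
          (outer_tr_open m hnn hmono hsub hadd hinv inj hWopen).symm
      _ = μc.outerMeasure V := by rw [preimage_image_eq V (tr_injective inj)]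

end OuterMeasure

/-- Main auxiliary result: from an invariant finitely additive density `m` we get the measure. -/
theorem exists_good_measure [AddSemigroup S] (hlc : ∀ a b c : S, a + b = a + c → b = c)
    (m : Set S → ℝ)
    (hnn : ∀ B : Set S, 0 ≤ m B)
    (hmono : ∀ B C : Set S, B ⊆ C → m B ≤ m C)
    (hsub : ∀ B C : Set S, m (B ∪ C) ≤ m B + m C)
    (hadd : ∀ B C : Set S, Disjoint B C → m (B ∪ C) = m B + m C)
    (hinv : ∀ (t : S) (B : Set S), m (preimT t B) = m B) :
    ∃ μ : @MeasureTheory.Measure (Ultrafilter S) (borel (Ultrafilter S)),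
      (∀ B : Set S, μ (clop B) = ENNReal.ofReal (m B)) ∧
      (∀ B : Set (Ultrafilter S), @MeasurableSet (Ultrafilter S) (borel (Ultrafilter S)) B →
        ∀ t : S,
        μ ((fun ν : Ultrafilter S => (pure t : Ultrafilter S) + ν) ⁻¹' B) = μ B ∧
        μ B = μ ((fun ν : Ultrafilter S => (pure t : Ultrafilter S) + ν) '' B)) := by
  letI : MeasurableSpace (Ultrafilter S) := borel (Ultrafilter S)
  haveI : BorelSpace (Ultrafilter S) := ⟨rfl⟩
  set μc := contOf m hnn hsub hadd with hμc
  have hm0 : m ∅ = 0 := by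
    have h := hadd ∅ ∅ (disjoint_bot_left)
    simp only [Set.union_empty] at h
    linarith
  have hclop : ∀ B : Set S, μc.measure (clop B) = ENNReal.ofReal (m B) := by
    intro B
    rw [μc.measure_apply (isOpen_clop B).measurableSet]
    exact outerMeasure_clop m hnn hmono hsub hadd B
  refine ⟨μc.measure, hclop, fun B hB t => ?_⟩
  have inj : Function.Injective (fun x : S => t + x) := fun x y h => hlc t x y h
  have key := outer_tr m hnn hmono hsub hadd hinv inj
  have hzero : μc.outerMeasure ((clop ((t + ·) '' univ))ᶜ) = 0 := by
    rw [← clop_compl, outerMeasure_clop m hnn hmono hsub hadd]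
    have h1 := hinv t (((t + ·) '' univ)ᶜ)
    have h2 : preimT t (((t + ·) '' univ)ᶜ) = ∅ := by
      ext x
      simp only [preimT, mem_setOf_eq, mem_compl_iff, mem_empty_iff_false, iff_false, not_not]
      exact mem_image_of_mem _ (mem_univ x)
    rw [h2, hm0] at h1
    rw [← h1, ENNReal.ofReal_zero]
  have houter_eq : ∀ X : Set (Ultrafilter S),
      μc.outerMeasure (X ∩ clop ((t + ·) '' univ)) = μc.outerMeasure X := by
    intro X
    refine le_antisymm (μc.outerMeasure.mono inter_subset_left) ?_
    have hd : μc.outerMeasure (X \ clop ((t + ·) '' univ)) = 0 :=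
      le_antisymm (le_trans (μc.outerMeasure.mono (diff_subset_compl _ _)) hzero.le) zero_le
    calc μc.outerMeasure X = μc.outerMeasure
          ((X ∩ clop ((t + ·) '' univ)) ∪ (X \ clop ((t + ·) '' univ))) := by
          rw [Set.inter_union_diff]
      _ ≤ μc.outerMeasure (X ∩ clop ((t + ·) '' univ)) +
          μc.outerMeasure (X \ clop ((t + ·) '' univ)) := measure_union_le _ _
      _ = μc.outerMeasure (X ∩ clop ((t + ·) '' univ)) := by rw [hd, add_zero]
  have hmeasT : Measurable (tr t) := (continuous_tr t).measurable
  have hembT : MeasurableEmbedding (tr t) :=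
    ((continuous_tr t).isClosedEmbedding (tr_injective inj)).measurableEmbedding
  constructor
  · show μc.measure (tr t ⁻¹' B) = μc.measure B
    rw [μc.measure_apply (hmeasT hB), μc.measure_apply hB, key B, houter_eq B]
  · show μc.measure B = μc.measure (tr t '' B)
    rw [μc.measure_apply hB, μc.measure_apply (hembT.measurableSet_image.2 hB)]
    have h1 := key (tr t '' B)
    rw [preimage_image_eq B (tr_injective inj), houter_eq] at h1
    exact h1

/-- The density sequence. -/
noncomputable def dseq (F : ℕ → Finset S) (B : Set S) (n : ℕ) : ℝ :=
  (Set.ncard (B ∩ ↑(F n)) : ℝ) / (F n).card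

theorem dseq_nonneg (F : ℕ → Finset S) (B : Set S) (n : ℕ) : 0 ≤ dseq F B n :=
  div_nonneg (Nat.cast_nonneg _) (Nat.cast_nonneg _)

theorem dseq_le_one (F : ℕ → Finset S) (B : Set S) (n : ℕ) : dseq F B n ≤ 1 := by
  rcases (F n).eq_empty_or_nonempty with h | h
  · simp [dseq, h]
  · rw [dseq, div_le_one (by exact_mod_cast h.card_pos)]
    have := Set.ncard_le_ncard (inter_subset_right : B ∩ ↑(F n) ⊆ ↑(F n)) (F n).finite_toSet
    rw [Set.ncard_coe_finset] at this
    exact_mod_cast this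

theorem dseq_univ (F : ℕ → Finset S) (hne : ∀ n, (F n).Nonempty) (n : ℕ) :
    dseq F univ n = 1 := by
  rw [dseq, Set.univ_inter, Set.ncard_coe_finset,
    div_self (by exact_mod_cast (hne n).card_pos.ne' : ((F n).card : ℝ) ≠ 0)]

theorem dseq_mono (F : ℕ → Finset S) {B C : Set S} (h : B ⊆ C) (n : ℕ) :
    dseq F B n ≤ dseq F C n := by
  rcases (F n).eq_empty_or_nonempty with he | he
  · simp [dseq, he]
  · rw [dseq, dseq, div_le_div_iff_of_pos_right (by exact_mod_cast he.card_pos)]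
    exact_mod_cast Set.ncard_le_ncard (inter_subset_inter_left _ h)
      ((F n).finite_toSet.subset inter_subset_right)

theorem dseq_union_le (F : ℕ → Finset S) (B C : Set S) (n : ℕ) :
    dseq F (B ∪ C) n ≤ dseq F B n + dseq F C n := by
  rcases (F n).eq_empty_or_nonempty with he | he
  · simp [dseq, he]
  · rw [dseq, dseq, dseq, ← add_div,
      div_le_div_iff_of_pos_right (by exact_mod_cast he.card_pos)]
    have : ((B ∪ C) ∩ ↑(F n)).ncard ≤ (B ∩ ↑(F n)).ncard + (C ∩ ↑(F n)).ncard := by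
      rw [Set.union_inter_distrib_right]
      exact Set.ncard_union_le _ _
    exact_mod_cast this

theorem dseq_add (F : ℕ → Finset S) {B C : Set S} (h : Disjoint B C) (n : ℕ) :
    dseq F (B ∪ C) n = dseq F B n + dseq F C n := by
  rw [dseq, dseq, dseq, ← add_div]
  congr 1
  rw [Set.union_inter_distrib_right,
    Set.ncard_union_eq (h.mono inter_subset_left inter_subset_left)
      ((F n).finite_toSet.subset inter_subset_right)
      ((F n).finite_toSet.subset inter_subset_right)]
  push_cast
  ring

theorem dseq_translate_est [AddSemigroup S] [DecidableEq S] {t : S}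
    (inj : Function.Injective (fun x : S => t + x)) (B : Set S) (G : Finset S) :
    |((preimT t B ∩ ↑G).ncard : ℝ) / G.card - ((B ∩ ↑G).ncard : ℝ) / G.card|
      ≤ (((G.image (t + ·)) ∆ G).card : ℝ) / G.card := by
  rcases G.eq_empty_or_nonempty with rfl | hG
  · simp
  have hc : (0 : ℝ) < G.card := by exact_mod_cast hG.card_pos
  set G' := G.image (t + ·) with hG'
  have step1 : (preimT t B ∩ ↑G).ncard = (B ∩ ↑G').ncard := by
    have himg : (fun x : S => t + x) '' (preimT t B ∩ ↑G) = B ∩ ↑G' := by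
      ext y
      constructor
      · rintro ⟨x, ⟨hxB, hxG⟩, rfl⟩
        exact ⟨hxB, by rw [hG', Finset.coe_image]; exact mem_image_of_mem _ hxG⟩
      · rintro ⟨hyB, hyG'⟩
        rw [hG', Finset.coe_image] at hyG'
        obtain ⟨x, hxG, rfl⟩ := hyG'
        exact ⟨x, ⟨hyB, hxG⟩, rfl⟩
    rw [← himg, Set.ncard_image_of_injective _ inj]
  have hdsub : ∀ H H' : Finset S, (B ∩ ↑H').ncard ≤ (B ∩ ↑H).ncard + (H' \ H).card := by
    intro H H'
    have hsubset : B ∩ ↑H' ⊆ (B ∩ ↑H) ∪ ↑(H' \ H) := by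
      rintro y ⟨hyB, hyH'⟩
      by_cases hy : y ∈ (↑H : Set S)
      · exact Or.inl ⟨hyB, hy⟩
      · right
        rw [Finset.coe_sdiff]
        exact ⟨hyH', hy⟩
    calc (B ∩ ↑H').ncard ≤ ((B ∩ ↑H) ∪ ↑(H' \ H)).ncard :=
          Set.ncard_le_ncard hsubset ((H.finite_toSet.subset inter_subset_right).union
            (H' \ H).finite_toSet)
      _ ≤ (B ∩ ↑H).ncard + (↑(H' \ H) : Set S).ncard := Set.ncard_union_le _ _
      _ = (B ∩ ↑H).ncard + (H' \ H).card := by rw [Set.ncard_coe_finset]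
  have hsd1 : (G' \ G).card ≤ (G' ∆ G).card :=
    Finset.card_le_card (fun x hx => by
      rw [Finset.mem_symmDiff]
      rcases Finset.mem_sdiff.1 hx with ⟨h1, h2⟩
      exact Or.inl ⟨h1, h2⟩)
  have hsd2 : (G \ G').card ≤ (G' ∆ G).card :=
    Finset.card_le_card (fun x hx => by
      rw [Finset.mem_symmDiff]
      rcases Finset.mem_sdiff.1 hx with ⟨h1, h2⟩
      exact Or.inr ⟨h1, h2⟩)
  have h2a := hdsub G G'
  have h2b := hdsub G' G
  rw [step1, div_sub_div_same, abs_div, abs_of_nonneg (by positivity : (0:ℝ) ≤ (G.card : ℝ))]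
  rw [div_le_div_iff_of_pos_right hc]
  refine abs_sub_le_iff.2 ⟨?_, ?_⟩
  · have : ((B ∩ ↑G').ncard : ℝ) ≤ ((B ∩ ↑G).ncard : ℝ) + ((G' ∆ G).card : ℝ) := by
      calc ((B ∩ ↑G').ncard : ℝ) ≤ ((B ∩ ↑G).ncard : ℝ) + ((G' \ G).card : ℝ) := by
            exact_mod_cast h2a
        _ ≤ _ := by
            have : ((G' \ G).card : ℝ) ≤ ((G' ∆ G).card : ℝ) := by exact_mod_cast hsd1
            linarith
    linarith
  · have : ((B ∩ ↑G).ncard : ℝ) ≤ ((B ∩ ↑G').ncard : ℝ) + ((G' ∆ G).card : ℝ) := by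
      calc ((B ∩ ↑G).ncard : ℝ) ≤ ((B ∩ ↑G').ncard : ℝ) + ((G \ G').card : ℝ) := by
            exact_mod_cast h2b
        _ ≤ _ := by
            have : ((G \ G').card : ℝ) ≤ ((G' ∆ G).card : ℝ) := by exact_mod_cast hsd2
            linarith
    linarith


end HindmanStrauss

open HindmanStrauss in
/-- Hindman–Strauss: for an infinite countable left cancellative additive semigroup `S`,
a left Følner sequence `ℱ` and `A ⊆ S`, there is a countably additive measure `μ` on the
Borel σ-algebra of the space `βS` of ultrafilters on `S` such that (1) `μ(cl A) = d̄_ℱ(A)`,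
(2) `μ(cl B) ≤ d̄_ℱ(B)` for all `B ⊆ S`, (3) `μ` is invariant under left translation by
principal ultrafilters, both for preimages and images of Borel sets, and (4) `μ(βS) = 1`. -/
theorem hindman_strauss (S : Type*) [AddSemigroup S] [Countable S] [Infinite S]
    [DecidableEq S] (hlc : ∀ a b c : S, a + b = a + c → b = c)
    (F : ℕ → Finset S) (hF : IsLeftFolner F) (A : Set S) :
    ∃ μ : @MeasureTheory.Measure (Ultrafilter S) (borel (Ultrafilter S)),
      μ {u : Ultrafilter S | A ∈ u} = ENNReal.ofReal (upperDensity F A) ∧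
      (∀ B : Set S, μ {u : Ultrafilter S | B ∈ u} ≤ ENNReal.ofReal (upperDensity F B)) ∧
      (∀ B : Set (Ultrafilter S), @MeasurableSet (Ultrafilter S) (borel (Ultrafilter S)) B → ∀ t : S,
        μ ((fun ν : Ultrafilter S => (pure t : Ultrafilter S) + ν) ⁻¹' B) = μ B ∧
        μ B = μ ((fun ν : Ultrafilter S => (pure t : Ultrafilter S) + ν) '' B)) ∧
      μ Set.univ = 1 := by
  classical
  obtain ⟨hne, hfol⟩ := hF
  have hbound : ∀ (B : Set S) (n : ℕ), dseq F B n ∈ Set.Icc (0:ℝ) 1 :=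
    fun B n => ⟨dseq_nonneg F B n, dseq_le_one F B n⟩
  have hbdd : ∀ B : Set S, Filter.IsBoundedUnder (· ≤ ·) Filter.atTop (dseq F B) :=
    fun B => Filter.isBoundedUnder_of ⟨1, fun n => (hbound B n).2⟩
  have hcobdd : ∀ B : Set S, Filter.IsCoboundedUnder (· ≤ ·) Filter.atTop (dseq F B) :=
    fun B => (Filter.isBoundedUnder_of ⟨0, fun n => (hbound B n).1⟩ :
      Filter.IsBoundedUnder (· ≥ ·) Filter.atTop (dseq F B)).isCoboundedUnder_le
  set d := Filter.limsup (dseq F A) Filter.atTop with hd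
  have hclus : MapClusterPt d Filter.atTop (dseq F A) := by
    rw [mapClusterPt_iff_frequently]
    intro s hs
    obtain ⟨ε, hε, hball⟩ := Metric.mem_nhds_iff.1 hs
    have h1 : ∀ᶠ n in Filter.atTop, dseq F A n < d + ε :=
      Filter.eventually_lt_of_limsup_lt (by rw [← hd]; linarith) (hbdd A)
    have h2 : ∃ᶠ n in Filter.atTop, d - ε < dseq F A n :=
      Filter.frequently_lt_of_lt_limsup (hcobdd A) (by rw [← hd]; linarith)
    refine (h2.and_eventually h1).mono fun n hn => hball ?_
    rw [Metric.mem_ball, Real.dist_eq]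
    exact abs_sub_lt_iff.2 ⟨by linarith [hn.1, hn.2], by linarith [hn.1, hn.2]⟩
  haveI hLne : (Filter.comap (dseq F A) (𝓝 d) ⊓ Filter.atTop).NeBot := by
    rw [← Filter.map_neBot_iff (dseq F A), Filter.push_pull']
    exact hclus
  set p : Ultrafilter ℕ := Ultrafilter.of (Filter.comap (dseq F A) (𝓝 d) ⊓ Filter.atTop) with hp
  have hpL := Ultrafilter.of_le (Filter.comap (dseq F A) (𝓝 d) ⊓ Filter.atTop)
  have hpTop : ↑p ≤ (Filter.atTop : Filter ℕ) := le_trans hpL inf_le_right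
  have hpa : Filter.Tendsto (dseq F A) ↑p (𝓝 d) := by
    rw [Filter.tendsto_iff_comap]
    exact le_trans hpL inf_le_left
  have hex : ∀ B : Set S, ∃ x, x ∈ Set.Icc (0:ℝ) 1 ∧ Filter.Tendsto (dseq F B) ↑p (𝓝 x) := by
    intro B
    obtain ⟨x, hx1, hx2⟩ := isCompact_Icc.ultrafilter_le_nhds (p.map (dseq F B))
      (le_principal_iff.2 (Filter.mem_map.2 (Filter.univ_mem' fun n => hbound B n)))
    exact ⟨x, hx1, by rwa [Ultrafilter.coe_map] at hx2⟩
  choose mv hmIcc hmten using hex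
  have hnn : ∀ B : Set S, 0 ≤ mv B := fun B => (hmIcc B).1
  have hmono : ∀ B C : Set S, B ⊆ C → mv B ≤ mv C := fun B C h =>
    le_of_tendsto_of_tendsto' (hmten B) (hmten C) (dseq_mono F h)
  have hsub : ∀ B C : Set S, mv (B ∪ C) ≤ mv B + mv C := fun B C =>
    le_of_tendsto_of_tendsto' (hmten (B ∪ C)) ((hmten B).add (hmten C)) (dseq_union_le F B C)
  have hadd : ∀ B C : Set S, Disjoint B C → mv (B ∪ C) = mv B + mv C := by
    intro B C h
    refine tendsto_nhds_unique (hmten (B ∪ C)) ?_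
    have hfun : (fun n => dseq F B n + dseq F C n) = dseq F (B ∪ C) :=
      funext fun n => (dseq_add F h n).symm
    rw [← hfun]
    exact (hmten B).add (hmten C)
  have hinv : ∀ (t : S) (B : Set S), mv (preimT t B) = mv B := by
    intro t B
    have inj : Function.Injective (fun x : S => t + x) := fun x y hxy => hlc t x y hxy
    have hest : ∀ n, ‖dseq F (preimT t B) n - dseq F B n‖ ≤
        ((((F n).image (t + ·)) ∆ (F n)).card : ℝ) / (F n).card := fun n => by
      simpa [Real.norm_eq_abs, dseq] using dseq_translate_est inj B (F n)
    have h0 : Filter.Tendsto (fun n => dseq F (preimT t B) n - dseq F B n)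
        Filter.atTop (𝓝 0) := squeeze_zero_norm hest (hfol t)
    have huniq := tendsto_nhds_unique ((hmten (preimT t B)).sub (hmten B)) (h0.mono_left hpTop)
    linarith [huniq]
  obtain ⟨μ, hμclop, hμinv⟩ := exists_good_measure hlc mv hnn hmono hsub hadd hinv
  have hA : mv A = d := tendsto_nhds_unique (hmten A) hpa
  refine ⟨μ, ?_, ?_, hμinv, ?_⟩
  · rw [show {u : Ultrafilter S | A ∈ u} = clop A from rfl, hμclop A, hA, hd]
    rfl
  · intro B
    rw [show {u : Ultrafilter S | B ∈ u} = clop B from rfl, hμclop B]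
    refine ENNReal.ofReal_le_ofReal ?_
    have h1 : mv B = Filter.limsup (dseq F B) ↑p := ((hmten B).limsup_eq).symm
    have h2 : Filter.limsup (dseq F B) ↑p ≤ Filter.limsup (dseq F B) Filter.atTop :=
      Filter.limsup_le_limsup_of_le hpTop
        ((Filter.isBoundedUnder_of ⟨0, fun n => (hbound B n).1⟩ :
          Filter.IsBoundedUnder (· ≥ ·) ↑p (dseq F B)).isCoboundedUnder_le) (hbdd B)
    show mv B ≤ Filter.limsup (dseq F B) Filter.atTop
    rw [h1]
    exact h2
  · have huniv : mv Set.univ = 1 := by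
      refine tendsto_nhds_unique (hmten Set.univ) ?_
      have : dseq F Set.univ = fun _ => (1:ℝ) := funext (dseq_univ F hne)
      rw [this]
      exact tendsto_const_nhds
    rw [show (Set.univ : Set (Ultrafilter S)) = clop (Set.univ : Set S) from clop_univ.symm,
      hμclop, huniv, ENNReal.ofReal_one]
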